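/- The classic interval narrowing △ on the interval domain over ℤ is a narrowing operator: a ⊓ b ⊑ a △ b ⊑ a for all intervals a, b, and for every a₀ and every sequence (bᵢ)_{i≥1} of intervals, the sequence defined by aᵢ = a_{i−1} △ bᵢ is ultimately stable. -/

import Mathlib

/-- Extended integers `ℤ ∪ {−∞, +∞}`: lower bounds live in `ℤ ∪ {−∞}` (i.e. are `≠ ⊤`),
upper bounds live in `ℤ ∪ {+∞}` (i.e. are `≠ ⊥`). -/
abbrev IntvEInt : Type := WithBot (WithTop ℤ)

/-- A non-empty interval `[lo, hi]` with `lo ∈ ℤ ∪ {−∞}`, `hi ∈ ℤ ∪ {+∞}` and `lo ≤ hi`. -/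
structure NEIntv : Type where
  lo : IntvEInt
  hi : IntvEInt
  lo_le_hi : lo ≤ hi
  lo_ne_top : lo ≠ (⊤ : IntvEInt)
  hi_ne_bot : hi ≠ (⊥ : IntvEInt)

/-- The interval domain over `ℤ`: `⊥` together with all non-empty intervals. -/
inductive Intv : Type where
  | bot : Intv
  | iv : NEIntv → Intv

namespace Intv

/-- Interval inclusion order. -/
def le : Intv → Intv → Prop
  | .bot, _ => True
  | .iv _, .bot => False
  | .iv a, .iv b => b.lo ≤ a.lo ∧ a.hi ≤ b.hi

/-- Join: the interval hull. -/
def sup : Intv → Intv → Intv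
  | .bot, x => x
  | .iv a, .bot => .iv a
  | .iv a, .iv b =>
    .iv { lo := min a.lo b.lo
          hi := max a.hi b.hi
          lo_le_hi := le_trans (min_le_left _ _) (le_trans a.lo_le_hi (le_max_left _ _))
          lo_ne_top := by
            intro h
            rcases min_choice a.lo b.lo with h' | h'
            · exact a.lo_ne_top (h'.symm.trans h)
            · exact b.lo_ne_top (h'.symm.trans h)
          hi_ne_bot := by
            intro h
            rcases max_choice a.hi b.hi with h' | h'
            · exact a.hi_ne_bot (h'.symm.trans h)
            · exact b.hi_ne_bot (h'.symm.trans h) }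

/-- Meet: intersection, the empty intersection being represented by `⊥`. -/
noncomputable def inf : Intv → Intv → Intv
  | .bot, _ => .bot
  | .iv _, .bot => .bot
  | .iv a, .iv b =>
    if h : max a.lo b.lo ≤ min a.hi b.hi then
      .iv { lo := max a.lo b.lo
            hi := min a.hi b.hi
            lo_le_hi := h
            lo_ne_top := by
              intro hh
              rcases max_choice a.lo b.lo with h' | h'
              · exact a.lo_ne_top (h'.symm.trans hh)
              · exact b.lo_ne_top (h'.symm.trans hh)
            hi_ne_bot := by
              intro hh
              rcases min_choice a.hi b.hi with h' | h'
              · exact a.hi_ne_bot (h'.symm.trans hh)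
              · exact b.hi_ne_bot (h'.symm.trans hh) }
    else .bot

/-- The classic interval widening:
`⊥ ∇ x = x`, `x ∇ ⊥ = x`, and
`[l_a,u_a] ∇ [l_b,u_b] = [(if l_a ≤ l_b then l_a else −∞), (if u_a ≥ u_b then u_a else +∞)]`. -/
noncomputable def widen : Intv → Intv → Intv
  | .bot, x => x
  | .iv a, .bot => .iv a
  | .iv a, .iv b =>
    .iv { lo := if a.lo ≤ b.lo then a.lo else (⊥ : IntvEInt)
          hi := if b.hi ≤ a.hi then a.hi else (⊤ : IntvEInt)
          lo_le_hi := by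
            split <;> split <;>
              first
                | exact a.lo_le_hi
                | exact le_top
                | exact bot_le
          lo_ne_top := by
            split
            · exact a.lo_ne_top
            · exact bot_ne_top
          hi_ne_bot := by
            split
            · exact a.hi_ne_bot
            · exact top_ne_bot }

/-- The classic interval narrowing:
`x △ ⊥ = ⊥`, `⊥ △ x = ⊥`, and
`[l_a,u_a] △ [l_b,u_b] = [(if l_a ≠ −∞ then l_a else l_b), (if u_a ≠ +∞ then u_a else u_b)]`
(an empty result being represented by `⊥`). -/
noncomputable def narrow : Intv → Intv → Intv
  | _, .bot => .bot
  | .bot, _ => .bot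
  | .iv a, .iv b =>
    if h : (if a.lo = (⊥ : IntvEInt) then b.lo else a.lo) ≤
           (if a.hi = (⊤ : IntvEInt) then b.hi else a.hi) then
      .iv { lo := if a.lo = (⊥ : IntvEInt) then b.lo else a.lo
            hi := if a.hi = (⊤ : IntvEInt) then b.hi else a.hi
            lo_le_hi := h
            lo_ne_top := by
              split
              · exact b.lo_ne_top
              · exact a.lo_ne_top
            hi_ne_bot := by
              split
              · exact b.hi_ne_bot
              · exact a.hi_ne_bot }
    else .bot

end Intv

theorem NEIntv.ext' {a b : NEIntv} (h1 : a.lo = b.lo) (h2 : a.hi = b.hi) : a = b := by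
  cases a; cases b; simp_all

/-- Measure for termination: `⊥` has measure 0, an interval has measure
`1` plus one for each infinite endpoint. -/
def Intv.m : Intv → ℕ
  | .bot => 0
  | .iv a => 1 + (if a.lo = (⊥ : IntvEInt) then 1 else 0) + (if a.hi = (⊤ : IntvEInt) then 1 else 0)

theorem Intv.narrow_step (x y : Intv) :
    Intv.narrow x y = x ∨ (Intv.narrow x y).m < x.m := by
  cases x with
  | bot => left; cases y <;> rfl
  | iv a =>
    cases y with
    | bot =>
      right
      show Intv.m .bot < Intv.m (.iv a)
      simp only [Intv.m]
      split_ifs <;> omega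
    | iv b =>
      simp only [Intv.narrow]
      by_cases hc : (if a.lo = (⊥ : IntvEInt) then b.lo else a.lo) ≤
          (if a.hi = (⊤ : IntvEInt) then b.hi else a.hi)
      · rw [dif_pos hc]
        by_cases hl : a.lo = (⊥ : IntvEInt) <;> by_cases hh : a.hi = (⊤ : IntvEInt)
        · by_cases hbl : b.lo = (⊥ : IntvEInt) <;> by_cases hbh : b.hi = (⊤ : IntvEInt)
          · left; exact congrArg Intv.iv (NEIntv.ext' (by simp [hl, hbl]) (by simp [hh, hbh]))
          · right; simp [Intv.m, hl, hh, hbl, hbh]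
          · right; simp [Intv.m, hl, hh, hbl, hbh]
          · right; simp [Intv.m, hl, hh, hbl, hbh]
        · by_cases hbl : b.lo = (⊥ : IntvEInt)
          · left; exact congrArg Intv.iv (NEIntv.ext' (by simp [hl, hbl]) (by simp [hh]))
          · right; simp [Intv.m, hl, hh, hbl]
        · by_cases hbh : b.hi = (⊤ : IntvEInt)
          · left; exact congrArg Intv.iv (NEIntv.ext' (by simp [hl]) (by simp [hh, hbh]))
          · right; simp [Intv.m, hl, hh, hbh]
        · left; exact congrArg Intv.iv (NEIntv.ext' (by simp [hl]) (by simp [hh]))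
      · rw [dif_neg hc]
        right
        show Intv.m .bot < Intv.m (.iv a)
        simp only [Intv.m]
        split_ifs <;> omega


/-- The classic interval narrowing is a narrowing operator:
`a ⊓ b ⊑ a △ b ⊑ a` for all intervals, and every narrowing sequence
`aᵢ = a_{i-1} △ bᵢ` is ultimately stable. -/
theorem interval_narrow_is_narrowing :
    (∀ a b : Intv, (Intv.inf a b).le (Intv.narrow a b) ∧ (Intv.narrow a b).le a) ∧
    (∀ (a b : ℕ → Intv), (∀ i, a (i + 1) = Intv.narrow (a i) (b (i + 1))) →
      ∃ i₀, ∀ i, i₀ ≤ i → a i = a i₀) := by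
  constructor
  · intro a b
    cases a with
    | bot => cases b <;> exact ⟨trivial, trivial⟩
    | iv a =>
      cases b with
      | bot => exact ⟨trivial, trivial⟩
      | iv b =>
        have hle1 : (if a.lo = (⊥ : IntvEInt) then b.lo else a.lo) ≤ max a.lo b.lo := by
          split_ifs with h
          · exact le_max_right _ _
          · exact le_max_left _ _
        have hle2 : min a.hi b.hi ≤ (if a.hi = (⊤ : IntvEInt) then b.hi else a.hi) := by
          split_ifs with h
          · exact min_le_right _ _
          · exact min_le_left _ _
        have hlo : a.lo ≤ (if a.lo = (⊥ : IntvEInt) then b.lo else a.lo) := by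
          split_ifs with h
          · exact le_trans (le_of_eq h) bot_le
          · exact le_refl _
        have hhi : (if a.hi = (⊤ : IntvEInt) then b.hi else a.hi) ≤ a.hi := by
          split_ifs with h
          · exact le_trans le_top (le_of_eq h.symm)
          · exact le_refl _
        by_cases hmax : max a.lo b.lo ≤ min a.hi b.hi
        · have hcond : (if a.lo = (⊥ : IntvEInt) then b.lo else a.lo) ≤
              (if a.hi = (⊤ : IntvEInt) then b.hi else a.hi) :=
            le_trans hle1 (le_trans hmax hle2)
          simp only [Intv.narrow, Intv.inf, dif_pos hcond, dif_pos hmax, Intv.le]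
          exact ⟨⟨hle1, hle2⟩, hlo, hhi⟩
        · simp only [Intv.narrow, Intv.inf, dif_neg hmax]
          by_cases hcond : (if a.lo = (⊥ : IntvEInt) then b.lo else a.lo) ≤
              (if a.hi = (⊤ : IntvEInt) then b.hi else a.hi)
          · rw [dif_pos hcond]
            exact ⟨trivial, hlo, hhi⟩
          · rw [dif_neg hcond]
            exact ⟨trivial, trivial⟩
  · intro a b hstep
    have key : ∀ i, a (i + 1) = a i ∨ (a (i + 1)).m < (a i).m := by
      intro i
      rw [hstep i]
      exact Intv.narrow_step (a i) (b (i + 1))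
    obtain ⟨i₀, hi₀⟩ : ∃ i₀, ∀ j, (a i₀).m ≤ (a j).m := by
      have hne : (Set.range fun i => (a i).m).Nonempty := ⟨(a 0).m, 0, rfl⟩
      obtain ⟨i₀, h⟩ := Nat.sInf_mem hne
      exact ⟨i₀, fun j => le_trans (le_of_eq h) (Nat.sInf_le ⟨j, rfl⟩)⟩
    refine ⟨i₀, ?_⟩
    intro i hi
    induction i, hi using Nat.le_induction with
    | base => rfl
    | succ i hi ih =>
      rcases key i with h | h
      · rw [h, ih]
      · rw [ih] at h
        exact absurd (hi₀ (i + 1)) (not_le.mpr h)
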